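/- arXiv:1309.0707 — 3 statements merged into one kernel-verified Lean document; each statement's English description precedes it below -/
import Mathlib

section
/- For a chi-square random variable χ²_{n_2} with n_2 = I_1 + I_2 degrees of freedom decomposed as χ²_{n_2} = χ²_{I_1} + χ²_{I_2} with independent parts, and thresholds r_1², r_2² > 0, the joint tail satisfies, for every u ∈ [0, 1/2): P[χ²_{I_1} > r_1² and χ²_{I_1} + χ²_{I_2} > r_2²] ≤ e^{-u r_2²} (1-2u)^{-n_2/2} · P[χ²_{I_1} > (1-2u) r_1²]. -/
open MeasureTheory ProbabilityTheory

/-- The chi-square distribution with `k` degrees of freedom, as the Gamma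
distribution with shape `k/2` and rate `1/2`. -/
noncomputable def chiSquareMeasure (k : ℕ) : Measure ℝ :=
  gammaMeasure ((k : ℝ) / 2) (1 / 2)


open Set
open scoped ENNReal

lemma tilt_pdf {a u x : ℝ} (ha : 0 < a) (hu0 : 0 ≤ u) (hu : u < 1/2) :
    ENNReal.ofReal (Real.exp (u * x)) * gammaPDF a (1/2) x
      = ENNReal.ofReal ((1 - 2*u) ^ (-a)) * gammaPDF a (1/2 - u) x := by
  have hc : (0:ℝ) < 1 - 2*u := by linarith
  have hcu : (0:ℝ) < 1/2 - u := by linarith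
  rcases le_or_gt 0 x with hx | hx
  · rw [gammaPDF_of_nonneg hx, gammaPDF_of_nonneg hx,
      ← ENNReal.ofReal_mul (Real.exp_nonneg _), ← ENNReal.ofReal_mul (by positivity)]
    congr 1
    have key : (1 - 2*u) ^ (-a) * (1/2 - u) ^ a = (1/2 : ℝ) ^ a := by
      rw [Real.rpow_neg hc.le, inv_mul_eq_div, ← Real.div_rpow hcu.le hc.le]
      rw [show (1/2 - u) / (1 - 2*u) = (1/2:ℝ) from by field_simp]
    have hexp : Real.exp (u*x) * Real.exp (-(1/2*x)) = Real.exp (-((1/2-u)*x)) := by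
      rw [← Real.exp_add]; ring_nf
    calc Real.exp (u*x) * ((1/2:ℝ)^a / Real.Gamma a * x ^ (a-1) * Real.exp (-(1/2*x)))
        = (1-2*u)^(-a) * ((1/2-u)^a / Real.Gamma a * x ^ (a-1))
            * (Real.exp (u*x) * Real.exp (-(1/2*x))) := by rw [← key]; ring
      _ = (1-2*u)^(-a) * ((1/2-u)^a / Real.Gamma a * x ^ (a-1) * Real.exp (-((1/2-u)*x))) := by
          rw [hexp]; ring
  · rw [gammaPDF_of_neg hx, gammaPDF_of_neg hx, mul_zero, mul_zero]

lemma measurable_gammaPDF (a r : ℝ) : Measurable (gammaPDF a r) :=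
  (measurable_gammaPDFReal a r).ennreal_ofReal

lemma scale_pdf {a c x : ℝ} (hc : 0 < c) :
    ENNReal.ofReal c * gammaPDF a (1/2) (c * x) = gammaPDF a (c/2) x := by
  rcases le_or_gt 0 x with hx | hx
  · rw [gammaPDF_of_nonneg (by positivity), gammaPDF_of_nonneg hx,
      ← ENNReal.ofReal_mul hc.le]
    congr 1
    have h1 : (c*x) ^ (a-1) = c ^ (a-1) * x ^ (a-1) := Real.mul_rpow hc.le hx
    have h2 : c * c ^ (a-1) = c ^ a := by
      nth_rewrite 1 [← Real.rpow_one c]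
      rw [← Real.rpow_add hc]; ring_nf
    have h3 : (c/2 : ℝ) ^ a = c ^ a * (1/2:ℝ) ^ a := by
      rw [show (c/2 : ℝ) = c * (1/2) by ring, Real.mul_rpow hc.le (by norm_num)]
    have h4 : -(1/2 * (c*x)) = -(c/2*x) := by ring
    rw [h1, h4, h3, ← h2]; ring
  · rw [gammaPDF_of_neg (by nlinarith), gammaPDF_of_neg hx, mul_zero]

lemma sub_tail {a c t : ℝ} (hc : 0 < c) :
    ∫⁻ x in Ioi (c*t), gammaPDF a (1/2) x = ∫⁻ x in Ioi t, gammaPDF a (c/2) x := by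
  rw [← lintegral_indicator measurableSet_Ioi (gammaPDF a (1/2)), ← lintegral_indicator measurableSet_Ioi (gammaPDF a (c/2))]
  have h1 : (volume : Measure ℝ) = ENNReal.ofReal |c| • Measure.map (c * ·) volume :=
    (Real.smul_map_volume_mul_left hc.ne').symm
  conv_lhs => rw [h1]
  rw [lintegral_smul_measure,
    lintegral_map ((measurable_gammaPDF a _).indicator measurableSet_Ioi)
      (measurable_const_mul c), abs_of_pos hc, smul_eq_mul,
    ← lintegral_const_mul' _ _ ENNReal.ofReal_ne_top]
  refine lintegral_congr fun x => ?_
  rcases lt_or_ge t x with h | h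
  · rw [indicator_of_mem (mem_Ioi.mpr ((mul_lt_mul_iff_right₀ hc).mpr h)),
      indicator_of_mem (mem_Ioi.mpr h), scale_pdf hc]
  · rw [indicator_of_notMem (by simpa using (mul_le_mul_iff_right₀ hc).mpr h),
      indicator_of_notMem (by simpa using h), mul_zero]

lemma hg_meas (u : ℝ) : Measurable fun x : ℝ => ENNReal.ofReal (Real.exp (u*x)) :=
  (Real.measurable_exp.comp (measurable_id.const_mul u)).ennreal_ofReal

lemma mgf_gamma {a u : ℝ} (ha : 0 < a) (hu0 : 0 ≤ u) (hu : u < 1/2) :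
    ∫⁻ x, ENNReal.ofReal (Real.exp (u*x)) ∂(gammaMeasure a (1/2))
      = ENNReal.ofReal ((1-2*u)^(-a)) := by
  rw [gammaMeasure,
    lintegral_withDensity_eq_lintegral_mul _ (measurable_gammaPDF a _) (hg_meas u)]
  have key : ∀ x, (gammaPDF a (1/2) * fun x => ENNReal.ofReal (Real.exp (u*x))) x
      = ENNReal.ofReal ((1-2*u)^(-a)) * gammaPDF a (1/2-u) x := fun x => by
    simp only [Pi.mul_apply]; rw [mul_comm, tilt_pdf ha hu0 hu]
  simp_rw [key]
  rw [lintegral_const_mul _ (measurable_gammaPDF a _),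
    lintegral_gammaPDF_eq_one ha (by linarith : (0:ℝ) < 1/2 - u), mul_one]

lemma tail_tilt {a u t : ℝ} (ha : 0 < a) (hu0 : 0 ≤ u) (hu : u < 1/2) :
    ∫⁻ x in Ioi t, ENNReal.ofReal (Real.exp (u*x)) ∂(gammaMeasure a (1/2))
      = ENNReal.ofReal ((1-2*u)^(-a)) * gammaMeasure a (1/2) (Ioi ((1-2*u)*t)) := by
  have hc : (0:ℝ) < 1-2*u := by linarith
  rw [gammaMeasure, withDensity_apply _ measurableSet_Ioi,
    restrict_withDensity measurableSet_Ioi,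
    lintegral_withDensity_eq_lintegral_mul _ (measurable_gammaPDF a _) (hg_meas u)]
  have key : ∀ x, (gammaPDF a (1/2) * fun x => ENNReal.ofReal (Real.exp (u*x))) x
      = ENNReal.ofReal ((1-2*u)^(-a)) * gammaPDF a (1/2-u) x := fun x => by
    simp only [Pi.mul_apply]; rw [mul_comm, tilt_pdf ha hu0 hu]
  simp_rw [key]
  rw [lintegral_const_mul _ (measurable_gammaPDF a _)]
  congr 1
  rw [show (1/2 - u : ℝ) = (1-2*u)/2 by ring, ← sub_tail hc]


/-- Chernoff bound on the joint upper tail of a pair of independent chi-square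
random variables: for u ∈ [0,1/2),
P[χ²_{I₁} > r₁² ∧ χ²_{I₁} + χ²_{I₂} > r₂²]
  ≤ e^{-u r₂²} (1-2u)^{-(I₁+I₂)/2} P[χ²_{I₁} > (1-2u) r₁²]. -/
theorem chiSquare_joint_tail_chernoff
    {Ω : Type*} [MeasurableSpace Ω] (μ : Measure Ω) [IsProbabilityMeasure μ]
    (I₁ I₂ : ℕ) (hI₁ : 0 < I₁) (hI₂ : 0 < I₂)
    (X Y : Ω → ℝ) (hX : Measurable X) (hY : Measurable Y)
    (hXY : IndepFun X Y μ)
    (hXlaw : μ.map X = chiSquareMeasure I₁) (hYlaw : μ.map Y = chiSquareMeasure I₂)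
    (r₁sq r₂sq : ℝ) (hr₁ : 0 < r₁sq) (hr₂ : 0 < r₂sq)
    (u : ℝ) (hu0 : 0 ≤ u) (hu : u < 1 / 2) :
    (μ {ω | r₁sq < X ω ∧ r₂sq < X ω + Y ω}).toReal
      ≤ Real.exp (-(u * r₂sq)) * (1 - 2 * u) ^ (-((I₁ + I₂ : ℝ)) / 2) *
        (μ {ω | (1 - 2 * u) * r₁sq < X ω}).toReal := by
  have hc : (0:ℝ) < 1 - 2*u := by linarith
  set ν₁ := chiSquareMeasure I₁ with hν₁
  set ν₂ := chiSquareMeasure I₂ with hν₂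
  have ha₁ : (0:ℝ) < (I₁ : ℝ)/2 := by positivity
  have ha₂ : (0:ℝ) < (I₂ : ℝ)/2 := by positivity
  have hprob₁ : IsProbabilityMeasure ν₁ := isProbabilityMeasure_gammaMeasure ha₁ (by norm_num)
  have hprob₂ : IsProbabilityMeasure ν₂ := isProbabilityMeasure_gammaMeasure ha₂ (by norm_num)
  have hmap : μ.map (fun ω => (X ω, Y ω)) = ν₁.prod ν₂ := by
    rw [← hXlaw, ← hYlaw]
    exact (indepFun_iff_map_prod_eq_prod_map_map hX.aemeasurable hY.aemeasurable).mp hXY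
  set T : Set (ℝ×ℝ) := {p | r₁sq < p.1 ∧ r₂sq < p.1 + p.2} with hTdef
  have hT : MeasurableSet T :=
    (measurableSet_lt measurable_const measurable_fst).inter
      (measurableSet_lt measurable_const (measurable_fst.add measurable_snd))
  have hA : μ {ω | r₁sq < X ω ∧ r₂sq < X ω + Y ω} = (ν₁.prod ν₂) T := by
    rw [← hmap, Measure.map_apply (hX.prodMk hY) hT]; rfl
  have hA2 : μ {ω | (1 - 2*u)*r₁sq < X ω} = ν₁ (Ioi ((1 - 2*u)*r₁sq)) := by
    rw [← hXlaw, Measure.map_apply hX measurableSet_Ioi]; rfl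
  set F₁ : ℝ → ℝ≥0∞ := (Ioi r₁sq).indicator (fun x => ENNReal.ofReal (Real.exp (u*x)))
    with hF₁def
  set F₂ : ℝ → ℝ≥0∞ := fun y => ENNReal.ofReal (Real.exp (u*y)) with hF₂def
  have hF₁m : Measurable F₁ := (hg_meas u).indicator measurableSet_Ioi
  have hF₂m : Measurable F₂ := hg_meas u
  have hbound : ∀ p : ℝ×ℝ, T.indicator (fun _ => (1:ℝ≥0∞)) p
      ≤ ENNReal.ofReal (Real.exp (-(u*r₂sq))) * (F₁ p.1 * F₂ p.2) := by
    intro p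
    by_cases hp : p ∈ T
    · obtain ⟨h1, h2⟩ := hp
      rw [indicator_of_mem (by exact ⟨h1, h2⟩), hF₁def,
        indicator_of_mem (mem_Ioi.mpr h1), hF₂def,
        ← ENNReal.ofReal_mul (Real.exp_nonneg _),
        ← ENNReal.ofReal_mul (by positivity), ← Real.exp_add, ← Real.exp_add]
      refine ENNReal.one_le_ofReal.mpr (Real.one_le_exp ?_)
      nlinarith
    · rw [indicator_of_notMem hp]; exact zero_le
  have hB : (ν₁.prod ν₂) T ≤ ENNReal.ofReal (Real.exp (-(u*r₂sq)))
      * ((∫⁻ x, F₁ x ∂ν₁) * ∫⁻ y, F₂ y ∂ν₂) := by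
    calc (ν₁.prod ν₂) T = ∫⁻ p, T.indicator (fun _ => (1:ℝ≥0∞)) p ∂(ν₁.prod ν₂) := by
          rw [lintegral_indicator hT, setLIntegral_one]
      _ ≤ ∫⁻ p, ENNReal.ofReal (Real.exp (-(u*r₂sq))) * (F₁ p.1 * F₂ p.2) ∂(ν₁.prod ν₂) :=
          lintegral_mono hbound
      _ = ENNReal.ofReal (Real.exp (-(u*r₂sq))) * ((∫⁻ x, F₁ x ∂ν₁) * ∫⁻ y, F₂ y ∂ν₂) := by
          rw [lintegral_const_mul' _ _ ENNReal.ofReal_ne_top,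
            lintegral_prod_mul hF₁m.aemeasurable hF₂m.aemeasurable]
  have hC₂ : ∫⁻ y, F₂ y ∂ν₂ = ENNReal.ofReal ((1-2*u)^(-((I₂:ℝ)/2))) := by
    rw [hν₂, hF₂def, chiSquareMeasure]; exact mgf_gamma ha₂ hu0 hu
  have hC₁ : ∫⁻ x, F₁ x ∂ν₁
      = ENNReal.ofReal ((1-2*u)^(-((I₁:ℝ)/2))) * ν₁ (Ioi ((1-2*u)*r₁sq)) := by
    rw [hν₁, hF₁def, chiSquareMeasure, lintegral_indicator measurableSet_Ioi]
    exact tail_tilt ha₁ hu0 hu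
  rw [hA, hA2]
  have hfin : ν₁ (Ioi ((1-2*u)*r₁sq)) ≠ ⊤ := measure_ne_top _ _
  have hRfin : ENNReal.ofReal (Real.exp (-(u*r₂sq)))
      * ((ENNReal.ofReal ((1-2*u)^(-((I₁:ℝ)/2))) * ν₁ (Ioi ((1-2*u)*r₁sq)))
        * ENNReal.ofReal ((1-2*u)^(-((I₂:ℝ)/2)))) ≠ ⊤ := by
    apply ENNReal.mul_ne_top ENNReal.ofReal_ne_top
    exact ENNReal.mul_ne_top (ENNReal.mul_ne_top ENNReal.ofReal_ne_top hfin) ENNReal.ofReal_ne_top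
  have hB' := hB
  rw [hC₁, hC₂] at hB'
  have := ENNReal.toReal_mono hRfin hB'
  refine this.trans (le_of_eq ?_)
  rw [ENNReal.toReal_mul, ENNReal.toReal_mul, ENNReal.toReal_mul,
    ENNReal.toReal_ofReal (Real.exp_nonneg _), ENNReal.toReal_ofReal (by positivity),
    ENNReal.toReal_ofReal (by positivity)]
  have hpow : (1-2*u)^(-((I₁:ℝ)/2)) * (1-2*u)^(-((I₂:ℝ)/2))
      = (1 - 2*u) ^ (-((I₁ + I₂ : ℝ)) / 2) := by
    rw [← Real.rpow_add hc]
    push_cast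
    ring_nf
  rw [← hpow]
  ring
end

section
/- With χ²_{I_1} and χ²_{I_2} independent chi-square variables and thresholds r_1², r_2² > 0, for every v ≥ 0: P[χ²_{I_1} > r_1² and χ²_{I_1} + χ²_{I_2} ≤ r_2²] ≤ e^{v r_2²} (1+2v)^{-(I_1+I_2)/2} · P[χ²_{I_1} > (1+2v) r_1²]. -/
open MeasureTheory ProbabilityTheory
open scoped ENNReal

lemma aux_pdf_scale (a v : ℝ) (hv : 0 ≤ v) (x : ℝ) :
    Real.exp (-(v * x)) * gammaPDFReal a (1/2) x
      = (1 + 2*v) ^ (-a) * ((1 + 2*v) * gammaPDFReal a (1/2) ((1 + 2*v) * x)) := by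
  set c : ℝ := 1 + 2*v with hc_def
  have hc : 0 < c := by rw [hc_def]; linarith
  unfold gammaPDFReal
  by_cases hx : 0 ≤ x
  · have hcx : 0 ≤ c * x := mul_nonneg hc.le hx
    rw [if_pos hx, if_pos hcx]
    have h1 : (c*x) ^ (a-1) = c ^ (a-1) * x ^ (a-1) := Real.mul_rpow hc.le hx
    have h2 : Real.exp (-(v*x)) * Real.exp (-(1/2*x)) = Real.exp (-(1/2*(c*x))) := by
      rw [← Real.exp_add, hc_def]; ring_nf
    have h3 : c ^ (-a) * c * c ^ (a-1) = 1 := by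
      rw [mul_comm (c ^ (-a)) c, mul_assoc, ← Real.rpow_add hc]
      have he : -a + (a-1) = -1 := by ring
      rw [he, Real.rpow_neg_one, mul_inv_cancel₀ hc.ne']
    rw [h1]
    calc Real.exp (-(v * x)) * ((1/2) ^ a / Real.Gamma a * x ^ (a - 1) * Real.exp (-(1/2 * x)))
        = ((1/2) ^ a / Real.Gamma a * x ^ (a - 1)) *
            (Real.exp (-(v*x)) * Real.exp (-(1/2*x))) := by ring
      _ = ((1/2) ^ a / Real.Gamma a * x ^ (a - 1)) * Real.exp (-(1/2*(c*x))) := by rw [h2]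
      _ = (c ^ (-a) * c * c ^ (a-1)) *
            ((1/2) ^ a / Real.Gamma a * x ^ (a - 1) * Real.exp (-(1/2*(c*x)))) := by
          rw [h3, one_mul]
      _ = c ^ (-a) * (c * ((1/2) ^ a / Real.Gamma a * (c ^ (a-1) * x ^ (a - 1)) *
            Real.exp (-(1/2 * (c * x))))) := by ring
  · have hcx : ¬ (0 ≤ c * x) := by
      rw [not_le] at hx ⊢; exact mul_neg_of_pos_of_neg hc hx
    rw [if_neg hx, if_neg hcx]
    ring

lemma aux_tail_transform (a v s : ℝ) (hv : 0 ≤ v) :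
    ∫⁻ x in Set.Ioi s, ENNReal.ofReal (Real.exp (-(v * x))) ∂(gammaMeasure a (1/2))
      = ENNReal.ofReal ((1 + 2*v) ^ (-a)) *
          gammaMeasure a (1/2) (Set.Ioi ((1 + 2*v) * s)) := by
  set c : ℝ := 1 + 2*v with hc_def
  have hc : 0 < c := by rw [hc_def]; linarith
  have hpdf_meas : Measurable (gammaPDF a (1/2)) :=
    (measurable_gammaPDFReal a (1/2)).ennreal_ofReal
  have hh_meas : Measurable ((Set.Ioi (c * s)).indicator (gammaPDF a (1/2))) :=
    hpdf_meas.indicator measurableSet_Ioi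
  rw [gammaMeasure, restrict_withDensity measurableSet_Ioi,
    lintegral_withDensity_eq_lintegral_mul _ hpdf_meas
      (show Measurable fun x : ℝ => ENNReal.ofReal (Real.exp (-(v * x))) from
        (measurable_const_mul v).neg.exp.ennreal_ofReal),
    ← lintegral_indicator measurableSet_Ioi _]
  have hpt : ∀ x : ℝ, (Set.Ioi s).indicator
        (gammaPDF a (1/2) * fun x => ENNReal.ofReal (Real.exp (-(v * x)))) x
      = ENNReal.ofReal (c ^ (-a)) * (ENNReal.ofReal c *
          (Set.Ioi (c * s)).indicator (gammaPDF a (1/2)) (c * x)) := by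
    intro x
    by_cases hx : x ∈ Set.Ioi s
    · have hcx : c * x ∈ Set.Ioi (c * s) := (mul_lt_mul_iff_right₀ hc).mpr hx
      rw [Set.indicator_of_mem hx, Set.indicator_of_mem hcx]
      show gammaPDF a (1/2) x * ENNReal.ofReal (Real.exp (-(v * x))) = _
      rw [gammaPDF, gammaPDF, mul_comm,
        ← ENNReal.ofReal_mul (Real.exp_nonneg _), aux_pdf_scale a v hv x,
        ENNReal.ofReal_mul (Real.rpow_nonneg hc.le _), ENNReal.ofReal_mul hc.le]
    · have hcx : c * x ∉ Set.Ioi (c * s) := by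
        simp only [Set.mem_Ioi, not_lt] at hx ⊢
        exact mul_le_mul_of_nonneg_left hx hc.le
      rw [Set.indicator_of_notMem hx, Set.indicator_of_notMem hcx, mul_zero, mul_zero]
  rw [lintegral_congr hpt,
    lintegral_const_mul' _ _ ENNReal.ofReal_ne_top,
    lintegral_const_mul' _ _ ENNReal.ofReal_ne_top]
  have hmap : ∫⁻ x, (Set.Ioi (c*s)).indicator (gammaPDF a (1/2)) (c * x) ∂volume
      = ENNReal.ofReal c⁻¹ * ∫⁻ y, (Set.Ioi (c*s)).indicator (gammaPDF a (1/2)) y ∂volume := by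
    have := lintegral_map (μ := volume) hh_meas (measurable_const_mul c)
    rw [Real.map_volume_mul_left hc.ne'] at this
    rw [← this, lintegral_smul_measure, abs_of_pos (inv_pos.mpr hc), smul_eq_mul]
  rw [hmap, ← mul_assoc, ← mul_assoc, mul_assoc (ENNReal.ofReal (c ^ (-a))),
    ← ENNReal.ofReal_mul hc.le, mul_inv_cancel₀ hc.ne', ENNReal.ofReal_one, mul_one,
    lintegral_indicator measurableSet_Ioi _, ← withDensity_apply _ measurableSet_Ioi]

lemma aux_full_le (a v : ℝ) (ha : 0 < a) (hv : 0 ≤ v) :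
    ∫⁻ x, ENNReal.ofReal (Real.exp (-(v * x))) ∂(gammaMeasure a (1/2))
      ≤ ENNReal.ofReal ((1 + 2*v) ^ (-a)) := by
  have hprob : IsProbabilityMeasure (gammaMeasure a (1/2)) :=
    isProbabilityMeasure_gammaMeasure ha (by norm_num)
  have hnull : gammaMeasure a (1/2) (Set.Iic (-1:ℝ)) = 0 := by
    rw [gammaMeasure, withDensity_apply _ measurableSet_Iic,
      setLIntegral_congr_fun measurableSet_Iic
        (fun x (hx : x ∈ Set.Iic (-1:ℝ)) => gammaPDF_of_neg (by linarith [Set.mem_Iic.mp hx]))]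
    simp
  calc ∫⁻ x, ENNReal.ofReal (Real.exp (-(v * x))) ∂(gammaMeasure a (1/2))
      = (∫⁻ x in Set.Ioi (-1:ℝ), ENNReal.ofReal (Real.exp (-(v * x)))
            ∂(gammaMeasure a (1/2)))
        + ∫⁻ x in Set.Iic (-1:ℝ), ENNReal.ofReal (Real.exp (-(v * x)))
            ∂(gammaMeasure a (1/2)) := by
        rw [← lintegral_add_compl _ (measurableSet_Ioi (a := (-1:ℝ)))]
        congr 1
        rw [Set.compl_Ioi]
    _ = ∫⁻ x in Set.Ioi (-1:ℝ), ENNReal.ofReal (Real.exp (-(v * x)))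
            ∂(gammaMeasure a (1/2)) := by
        rw [setLIntegral_measure_zero _ _ hnull, add_zero]
    _ = ENNReal.ofReal ((1 + 2*v) ^ (-a)) *
          gammaMeasure a (1/2) (Set.Ioi ((1 + 2*v) * (-1))) := aux_tail_transform a v (-1) hv
    _ ≤ ENNReal.ofReal ((1 + 2*v) ^ (-a)) * 1 :=
        mul_le_mul_right prob_le_one _
    _ = _ := mul_one _

/-- Lower-tail Chernoff bound: for v ≥ 0,
P[χ²_{I₁} > r₁² ∧ χ²_{I₁} + χ²_{I₂} ≤ r₂²]
  ≤ e^{v r₂²} (1+2v)^{-(I₁+I₂)/2} P[χ²_{I₁} > (1+2v) r₁²]. -/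
theorem chiSquare_tail_lowerTail_chernoff
    {Ω : Type*} [MeasurableSpace Ω] (μ : Measure Ω) [IsProbabilityMeasure μ]
    (I₁ I₂ : ℕ) (hI₁ : 0 < I₁) (hI₂ : 0 < I₂)
    (X Y : Ω → ℝ) (hX : Measurable X) (hY : Measurable Y)
    (hXY : IndepFun X Y μ)
    (hXlaw : μ.map X = chiSquareMeasure I₁) (hYlaw : μ.map Y = chiSquareMeasure I₂)
    (r₁sq r₂sq : ℝ) (hr₁ : 0 < r₁sq) (hr₂ : 0 < r₂sq)
    (v : ℝ) (hv : 0 ≤ v) :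
    (μ {ω | r₁sq < X ω ∧ X ω + Y ω ≤ r₂sq}).toReal
      ≤ Real.exp (v * r₂sq) * (1 + 2 * v) ^ (-((I₁ + I₂ : ℝ)) / 2) *
        (μ {ω | (1 + 2 * v) * r₁sq < X ω}).toReal := by
  set c : ℝ := 1 + 2 * v with hc_def
  have hc : 0 < c := by rw [hc_def]; linarith
  set f : ℝ → ℝ≥0∞ :=
    (Set.Ioi r₁sq).indicator (fun x => ENNReal.ofReal (Real.exp (-(v * x)))) with hf_def
  set g : ℝ → ℝ≥0∞ := fun y => ENNReal.ofReal (Real.exp (-(v * y))) with hg_def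
  have hexp_meas : Measurable (fun x : ℝ => ENNReal.ofReal (Real.exp (-(v * x)))) :=
    (measurable_const_mul v).neg.exp.ennreal_ofReal
  have hf_meas : Measurable f := hexp_meas.indicator measurableSet_Ioi
  have hg_meas : Measurable g := hexp_meas
  have hE : MeasurableSet {ω | r₁sq < X ω ∧ X ω + Y ω ≤ r₂sq} :=
    (measurableSet_lt measurable_const hX).inter
      (measurableSet_le (hX.add hY) measurable_const)
  -- Step 1: Chernoff bound
  have step1 : μ {ω | r₁sq < X ω ∧ X ω + Y ω ≤ r₂sq}
      ≤ ENNReal.ofReal (Real.exp (v * r₂sq)) * ∫⁻ ω, f (X ω) * g (Y ω) ∂μ := by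
    rw [← lintegral_indicator_one hE, ← lintegral_const_mul' _ _ ENNReal.ofReal_ne_top]
    refine lintegral_mono fun ω => ?_
    by_cases hω : ω ∈ {ω | r₁sq < X ω ∧ X ω + Y ω ≤ r₂sq}
    · rw [Set.indicator_of_mem hω]
      have hfX : f (X ω) = ENNReal.ofReal (Real.exp (-(v * X ω))) :=
        Set.indicator_of_mem hω.1 _
      rw [hfX, hg_def]
      rw [← ENNReal.ofReal_mul (Real.exp_nonneg _), ← Real.exp_add,
        ← ENNReal.ofReal_mul (Real.exp_nonneg _), ← Real.exp_add]
      show (1 : ℝ≥0∞) ≤ _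
      rw [ENNReal.one_le_ofReal]
      have hvs : v * (X ω + Y ω) ≤ v * r₂sq := mul_le_mul_of_nonneg_left hω.2 hv
      calc (1:ℝ) = Real.exp 0 := Real.exp_zero.symm
        _ ≤ _ := Real.exp_le_exp.mpr (by nlinarith)
    · rw [Set.indicator_of_notMem hω]
      exact zero_le
  -- Step 2: independence
  have step2 : ∫⁻ ω, f (X ω) * g (Y ω) ∂μ
      = (∫⁻ ω, f (X ω) ∂μ) * ∫⁻ ω, g (Y ω) ∂μ :=
    lintegral_mul_eq_lintegral_mul_lintegral_of_indepFun''
      (hf_meas.comp hX).aemeasurable (hg_meas.comp hY).aemeasurable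
      (hXY.comp hf_meas hg_meas)
  -- Step 3: the X factor
  have step3 : ∫⁻ ω, f (X ω) ∂μ
      = ENNReal.ofReal (c ^ (-((I₁:ℝ)/2))) * μ {ω | c * r₁sq < X ω} := by
    have hmeq : gammaMeasure ((I₁:ℝ)/2) (1/2) (Set.Ioi ((1+2*v) * r₁sq))
        = μ {ω | c * r₁sq < X ω} := by
      rw [show gammaMeasure ((I₁:ℝ)/2) (1/2) = chiSquareMeasure I₁ from rfl,
        ← hXlaw, Measure.map_apply hX measurableSet_Ioi, hc_def]
      rfl
    rw [← lintegral_map hf_meas hX, hXlaw, chiSquareMeasure, hf_def,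
      lintegral_indicator measurableSet_Ioi _, aux_tail_transform _ v r₁sq hv, hmeq, hc_def]
  -- Step 4: the Y factor
  have step4 : ∫⁻ ω, g (Y ω) ∂μ ≤ ENNReal.ofReal (c ^ (-((I₂:ℝ)/2))) := by
    rw [← lintegral_map hg_meas hY, hYlaw, chiSquareMeasure, hc_def]
    exact aux_full_le ((I₂:ℝ)/2) v (div_pos (Nat.cast_pos.mpr hI₂) two_pos) hv
  -- Combine in ℝ≥0∞
  have key : μ {ω | r₁sq < X ω ∧ X ω + Y ω ≤ r₂sq}
      ≤ ENNReal.ofReal (Real.exp (v * r₂sq) * c ^ (-((I₁ + I₂ : ℝ)) / 2)) *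
          μ {ω | c * r₁sq < X ω} := by
    refine step1.trans ?_
    rw [step2, step3]
    have hsplit : c ^ (-((I₁ + I₂ : ℝ)) / 2) = c ^ (-((I₁:ℝ)/2)) * c ^ (-((I₂:ℝ)/2)) := by
      rw [← Real.rpow_add hc]
      norm_num
      ring_nf
    rw [hsplit, ENNReal.ofReal_mul (by positivity), ENNReal.ofReal_mul (by positivity)]
    calc ENNReal.ofReal (Real.exp (v * r₂sq)) *
          (ENNReal.ofReal (c ^ (-((I₁:ℝ)/2))) * μ {ω | c * r₁sq < X ω} * ∫⁻ ω, g (Y ω) ∂μ)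
        ≤ ENNReal.ofReal (Real.exp (v * r₂sq)) *
          (ENNReal.ofReal (c ^ (-((I₁:ℝ)/2))) * μ {ω | c * r₁sq < X ω} *
            ENNReal.ofReal (c ^ (-((I₂:ℝ)/2)))) := by
          exact mul_le_mul_right (mul_le_mul_right step4 _) _
      _ = ENNReal.ofReal (Real.exp (v * r₂sq)) * ENNReal.ofReal (c ^ (-((I₁:ℝ)/2))) *
            ENNReal.ofReal (c ^ (-((I₂:ℝ)/2))) * μ {ω | c * r₁sq < X ω} := by ring
      _ = ENNReal.ofReal (Real.exp (v * r₂sq)) *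
            (ENNReal.ofReal (c ^ (-((I₁:ℝ)/2))) * ENNReal.ofReal (c ^ (-((I₂:ℝ)/2)))) *
            μ {ω | c * r₁sq < X ω} := by ring
  -- toReal
  have hfin : ENNReal.ofReal (Real.exp (v * r₂sq) * c ^ (-((I₁ + I₂ : ℝ)) / 2)) *
      μ {ω | c * r₁sq < X ω} ≠ ⊤ :=
    ENNReal.mul_ne_top ENNReal.ofReal_ne_top (measure_ne_top μ _)
  have := ENNReal.toReal_mono hfin key
  rw [ENNReal.toReal_mul, ENNReal.toReal_ofReal (by positivity)] at this
  calc (μ {ω | r₁sq < X ω ∧ X ω + Y ω ≤ r₂sq}).toReal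
      ≤ Real.exp (v * r₂sq) * c ^ (-((I₁ + I₂ : ℝ)) / 2) *
          (μ {ω | c * r₁sq < X ω}).toReal := this
    _ = _ := by rw [hc_def]
end

section
/- For a BSC with crossover probability p ∈ (0, 1/2), the probability that a maximum-likelihood / bounded-distance decoder errs with any code of M codewords and blocklength n is at least Σ_{t=r+1}^{n} C(n,t) p^t (1-p)^{n-t}, where r is the largest integer such that M·Σ_{t=0}^{r-1} C(n,t) ≤ 2^n — equivalently, for any partition of {0,1}^n into M decoding regions, some region has at most 2^n/M points, and the error probability given the corresponding codeword is minimized by a Hamming ball, yielding the stated binomial tail lower bound. -/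
open Finset

/-- Equivalence between binary words and their difference set with `c`. -/
def diffEquiv (n : ℕ) (c : Fin n → Bool) : (Fin n → Bool) ≃ Finset (Fin n) where
  toFun y := Finset.filter (fun j => c j ≠ y j) univ
  invFun s := fun j => if j ∈ s then !(c j) else c j
  left_inv y := by
    funext j
    by_cases h : c j = y j
    · simp [h]
    · simp only [mem_filter, mem_univ, true_and, not_false_iff]
      rw [if_pos (by simpa using h)]
      cases hc : c j <;> cases hy : y j <;> simp_all
  right_inv s := by
    ext j
    simp only [mem_filter, mem_univ, true_and]
    by_cases h : j ∈ s <;> simp [h]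

lemma hammingDist_diffEquiv (n : ℕ) (c y : Fin n → Bool) :
    hammingDist c y = (diffEquiv n c y).card := rfl

/-- Summing a function of the Hamming distance over all words. -/
lemma sum_dist (n : ℕ) (c : Fin n → Bool) (F : ℕ → ℝ) :
    ∑ y : Fin n → Bool, F (hammingDist c y)
      = ∑ t ∈ range (n + 1), (n.choose t : ℝ) * F t := by
  rw [← Equiv.sum_comp (diffEquiv n c).symm (fun y => F (hammingDist c y))]
  simp only [hammingDist_diffEquiv, Equiv.apply_symm_apply]
  have h1 : ∑ s : Finset (Fin n), F s.card
      = ∑ s ∈ (univ : Finset (Fin n)).powerset, F s.card := by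
    rw [powerset_univ]
  rw [h1, Finset.sum_powerset]
  simp only [card_univ, Fintype.card_fin]
  refine Finset.sum_congr rfl fun t _ => ?_
  rw [Finset.sum_congr rfl (fun s hs => by rw [(mem_powersetCard.1 hs).2]), sum_const,
    card_powersetCard, card_univ, Fintype.card_fin, nsmul_eq_mul]

/-- Monotonicity of noise probabilities in the weight. -/
lemma v_anti {p : ℝ} (hp : 0 < p) (hpq : p ≤ 1 - p) {n t t' : ℕ}
    (h : t ≤ t') (h' : t' ≤ n) :
    p ^ t' * (1 - p) ^ (n - t') ≤ p ^ t * (1 - p) ^ (n - t) := by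
  have hq : (0:ℝ) ≤ 1 - p := le_trans hp.le hpq
  obtain ⟨k, rfl⟩ := Nat.exists_eq_add_of_le h
  have hn : n - t = (n - (t + k)) + k := by omega
  rw [hn]
  calc p ^ (t + k) * (1 - p) ^ (n - (t + k))
      = p ^ t * (1 - p) ^ (n - (t + k)) * p ^ k := by rw [pow_add]; ring
    _ ≤ p ^ t * (1 - p) ^ (n - (t + k)) * (1 - p) ^ k := by
        apply mul_le_mul_of_nonneg_left (pow_le_pow_left₀ hp.le hpq k)
        positivity
    _ = p ^ t * (1 - p) ^ ((n - (t + k)) + k) := by rw [pow_add]; ring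

/-- Sphere-packing lower bound for the BSC: for crossover probability
p ∈ (0, 1/2), any code with M codewords of blocklength n and decoding regions
partitioning {0,1}ⁿ has average error probability at least the binomial tail
Σ_{t=r+1}^n C(n,t) p^t (1-p)^(n-t), where r is the largest integer with
M·Σ_{t=0}^{r-1} C(n,t) ≤ 2ⁿ. -/
theorem bsc_sphere_packing_lower_bound
    (n M r : ℕ) (hM : 0 < M) (p : ℝ) (hp : 0 < p) (hp2 : p < 1 / 2)
    (c : Fin M → (Fin n → Bool)) (D : Fin M → Finset (Fin n → Bool))
    (hpart : ∀ y : Fin n → Bool, ∃! i, y ∈ D i)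
    (hr : M * ∑ t ∈ Finset.range r, n.choose t ≤ 2 ^ n)
    (hr' : 2 ^ n < M * ∑ t ∈ Finset.range (r + 1), n.choose t) :
    ∑ t ∈ Finset.Icc (r + 1) n, (n.choose t : ℝ) * p ^ t * (1 - p) ^ (n - t)
      ≤ (1 / M : ℝ) * ∑ i : Fin M, ∑ y ∈ (D i)ᶜ,
          p ^ hammingDist (c i) y * (1 - p) ^ (n - hammingDist (c i) y) := by
  have hq : (0:ℝ) < 1 - p := by linarith
  have hpq : p ≤ 1 - p := by linarith
  -- trivial case r ≥ n
  by_cases hrn : n ≤ r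
  · rw [Finset.Icc_eq_empty (by omega), Finset.sum_empty]
    refine mul_nonneg (by positivity)
      (Finset.sum_nonneg fun i _ => Finset.sum_nonneg fun y _ =>
        mul_nonneg (pow_nonneg hp.le _) (pow_nonneg hq.le _))
  push_neg at hrn
  have hr1n : r + 1 ≤ n := hrn
  -- distances are at most n
  have hdle : ∀ (i : Fin M) (y : Fin n → Bool), hammingDist (c i) y ≤ n := fun i y => by
    simpa using (hammingDist_le_card_fintype (x := c i) (y := y))
  set f : Fin M → (Fin n → Bool) → ℝ :=
    fun i y => p ^ hammingDist (c i) y * (1 - p) ^ (n - hammingDist (c i) y) with hf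
  set T : ℝ := ∑ t ∈ range (r + 1), (n.choose t : ℝ) * (p ^ t * (1 - p) ^ (n - t)) with hT
  set V : ℕ := ∑ t ∈ range (r + 1), n.choose t with hV
  -- total probability is 1
  have hone : ∑ t ∈ range (n + 1), (n.choose t : ℝ) * (p ^ t * (1 - p) ^ (n - t)) = 1 := by
    have hb := add_pow p (1 - p) n
    simp only [add_sub_cancel, one_pow] at hb
    calc ∑ t ∈ range (n + 1), (n.choose t : ℝ) * (p ^ t * (1 - p) ^ (n - t))
        = ∑ t ∈ range (n + 1), p ^ t * (1 - p) ^ (n - t) * (n.choose t : ℝ) :=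
          Finset.sum_congr rfl fun t _ => by ring
      _ = 1 := hb.symm
  have hsum1 : ∀ i : Fin M, ∑ y : Fin n → Bool, f i y = 1 := fun i => by
    rw [hf]
    rw [sum_dist n (c i) (fun t => p ^ t * (1 - p) ^ (n - t))]
    exact hone
  -- ball facts
  have hball : ∀ i : Fin M,
      ∑ y ∈ Finset.filter (fun y => hammingDist (c i) y ≤ r) univ, f i y = T := by
    intro i
    have h1 : ∑ y ∈ Finset.filter (fun y => hammingDist (c i) y ≤ r) univ, f i y
        = ∑ y : Fin n → Bool,
            (if hammingDist (c i) y ≤ r then p ^ hammingDist (c i) y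
              * (1 - p) ^ (n - hammingDist (c i) y) else 0) := by
      rw [Finset.sum_filter]
    rw [h1, sum_dist n (c i) (fun t => if t ≤ r then p ^ t * (1 - p) ^ (n - t) else 0), hT]
    have h2 : ∀ t ∈ range (n + 1), (n.choose t : ℝ)
        * (if t ≤ r then p ^ t * (1 - p) ^ (n - t) else 0)
        = if t ≤ r then (n.choose t : ℝ) * (p ^ t * (1 - p) ^ (n - t)) else 0 := by
      intro t _
      by_cases h : t ≤ r <;> simp [h]
    rw [Finset.sum_congr rfl h2, ← Finset.sum_filter]
    congr 1
    ext t
    simp only [Finset.mem_filter, Finset.mem_range]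
    omega
  have hballcard : ∀ i : Fin M,
      (Finset.filter (fun y => hammingDist (c i) y ≤ r) univ).card = V := by
    intro i
    have h1 : ((Finset.filter (fun y => hammingDist (c i) y ≤ r) univ).card : ℝ)
        = ∑ y : Fin n → Bool, (if hammingDist (c i) y ≤ r then (1:ℝ) else 0) := by
      rw [Finset.card_filter]
      push_cast [apply_ite ((↑·) : ℕ → ℝ)]
      rfl
    rw [sum_dist n (c i) (fun t => if t ≤ r then (1:ℝ) else 0)] at h1
    have h2 : ∑ t ∈ range (n + 1), (n.choose t : ℝ) * (if t ≤ r then (1:ℝ) else 0)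
        = (V : ℝ) := by
      rw [hV]
      push_cast
      have h3 : ∀ t ∈ range (n + 1), (n.choose t : ℝ) * (if t ≤ r then (1:ℝ) else 0)
          = if t ≤ r then (n.choose t : ℝ) else 0 := by
        intro t _
        by_cases h : t ≤ r <;> simp [h]
      rw [Finset.sum_congr rfl h3, ← Finset.sum_filter]
      congr 1
      ext t
      simp only [Finset.mem_filter, Finset.mem_range]
      omega
    rw [h2] at h1
    exact_mod_cast h1
  -- per-region bound
  have hregion : ∀ i : Fin M,
      ∑ y ∈ D i, f i y ≤ T + p ^ (r+1) * (1 - p) ^ (n - (r+1)) * (((D i).card : ℝ) - V) := by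
    intro i
    set B := Finset.filter (fun y => hammingDist (c i) y ≤ r) univ with hB
    have hS : ∑ y ∈ D i, f i y = ∑ y ∈ D i ∩ B, f i y + ∑ y ∈ D i \ B, f i y :=
      (Finset.sum_inter_add_sum_sdiff _ _ _).symm
    have hBs : T = ∑ y ∈ B ∩ D i, f i y + ∑ y ∈ B \ D i, f i y := by
      rw [Finset.sum_inter_add_sum_sdiff, hball i]
    have hIC : B ∩ D i = D i ∩ B := Finset.inter_comm _ _
    set w : ℝ := p ^ (r+1) * (1 - p) ^ (n - (r+1)) with hw
    have hub : ∑ y ∈ D i \ B, f i y ≤ ((D i \ B).card : ℝ) * w := by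
      rw [← nsmul_eq_mul]
      apply Finset.sum_le_card_nsmul
      intro y hy
      have hy' : ¬ hammingDist (c i) y ≤ r := by
        simp only [hB, Finset.mem_sdiff, Finset.mem_filter, Finset.mem_univ, true_and] at hy
        exact hy.2
      exact v_anti hp hpq (by omega) (hdle i y)
    have hlb : ((B \ D i).card : ℝ) * w ≤ ∑ y ∈ B \ D i, f i y := by
      rw [← nsmul_eq_mul]
      apply Finset.card_nsmul_le_sum
      intro y hy
      have hy' : hammingDist (c i) y ≤ r := by
        simp only [hB, Finset.mem_sdiff, Finset.mem_filter, Finset.mem_univ, true_and] at hy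
        exact hy.1
      exact v_anti hp hpq (by omega) hr1n
    have hc1 : (D i \ B).card + (D i ∩ B).card = (D i).card :=
      Finset.card_sdiff_add_card_inter _ _
    have hc2 : (B \ D i).card + (B ∩ D i).card = B.card :=
      Finset.card_sdiff_add_card_inter _ _
    have hc3 : B.card = V := hballcard i
    have hcr : ((D i \ B).card : ℝ) - ((B \ D i).card : ℝ) = ((D i).card : ℝ) - V := by
      have e1 : ((D i \ B).card : ℝ) + ((D i ∩ B).card : ℝ) = ((D i).card : ℝ) := by
        exact_mod_cast congrArg (Nat.cast (R := ℝ)) hc1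
      have e2 : ((B \ D i).card : ℝ) + ((B ∩ D i).card : ℝ) = (V : ℝ) := by
        rw [← hc3]
        exact_mod_cast congrArg (Nat.cast (R := ℝ)) hc2
      rw [hIC] at e2
      linarith
    have hmul : (((D i \ B).card : ℝ) - ((B \ D i).card : ℝ)) * w
        = (((D i).card : ℝ) - V) * w := by rw [hcr]
    rw [hS, hBs, hIC]
    linarith [hub, hlb, hmul]
  -- partition cardinality
  have hcard : ∑ i : Fin M, (D i).card = 2 ^ n := by
    have h1 : ∀ y : Fin n → Bool, (Finset.filter (fun i => y ∈ D i) univ).card = 1 := by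
      intro y
      obtain ⟨i0, hi0, huniq⟩ := hpart y
      rw [Finset.card_eq_one]
      refine ⟨i0, ?_⟩
      ext j
      simp only [Finset.mem_filter, Finset.mem_univ, true_and, Finset.mem_singleton]
      exact ⟨fun h => huniq j h, fun h => h ▸ hi0⟩
    calc ∑ i : Fin M, (D i).card
        = ∑ i : Fin M, ∑ y : Fin n → Bool, (if y ∈ D i then 1 else 0) := by
          refine Finset.sum_congr rfl fun i _ => ?_
          rw [Finset.sum_ite_mem, univ_inter, Finset.sum_const, smul_eq_mul, mul_one]
      _ = ∑ y : Fin n → Bool, ∑ i : Fin M, (if y ∈ D i then 1 else 0) := Finset.sum_comm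
      _ = ∑ y : Fin n → Bool, (Finset.filter (fun i => y ∈ D i) univ).card := by
          refine Finset.sum_congr rfl fun y _ => ?_
          rw [Finset.card_filter]
      _ = ∑ y : Fin n → Bool, 1 := Finset.sum_congr rfl fun y _ => h1 y
      _ = 2 ^ n := by simp [Finset.card_univ]
  -- error sum
  have herr : ∀ i : Fin M, ∑ y ∈ (D i)ᶜ, f i y = 1 - ∑ y ∈ D i, f i y := by
    intro i
    have := Finset.sum_add_sum_compl (D i) (f i)
    rw [hsum1 i] at this
    linarith
  -- combine
  have hw0 : (0:ℝ) ≤ p ^ (r+1) * (1 - p) ^ (n - (r+1)) := by positivity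
  have hMV : (2:ℝ) ^ n - (M : ℝ) * V < 0 := by
    have : (2:ℝ) ^ n < (M : ℝ) * V := by exact_mod_cast hr'
    linarith
  have hEbound : ∑ i : Fin M, ∑ y ∈ D i, f i y ≤ (M : ℝ) * T := by
    calc ∑ i : Fin M, ∑ y ∈ D i, f i y
        ≤ ∑ i : Fin M, (T + p ^ (r+1) * (1 - p) ^ (n - (r+1)) * (((D i).card : ℝ) - V)) :=
          Finset.sum_le_sum fun i _ => hregion i
      _ = (M : ℝ) * T + p ^ (r+1) * (1 - p) ^ (n - (r+1)) * ((2:ℝ) ^ n - (M : ℝ) * V) := by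
          rw [Finset.sum_add_distrib, Finset.sum_const, ← Finset.mul_sum]
          have : ∑ i : Fin M, (((D i).card : ℝ) - V) = (2:ℝ) ^ n - (M : ℝ) * V := by
            rw [Finset.sum_sub_distrib, Finset.sum_const]
            have : ∑ i : Fin M, ((D i).card : ℝ) = (2:ℝ) ^ n := by
              rw [← Nat.cast_sum]
              exact_mod_cast congrArg (Nat.cast (R := ℝ)) hcard
            rw [this]
            simp [Finset.card_univ, mul_comm]
          rw [this]
          simp [Finset.card_univ, nsmul_eq_mul]
      _ ≤ (M : ℝ) * T := by nlinarith
  -- tail identity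
  have htail : ∑ t ∈ Finset.Icc (r + 1) n, (n.choose t : ℝ) * p ^ t * (1 - p) ^ (n - t)
      = 1 - T := by
    have hsplit : ∑ t ∈ range (r + 1), (n.choose t : ℝ) * (p ^ t * (1 - p) ^ (n - t))
        + ∑ t ∈ Finset.Ico (r + 1) (n + 1), (n.choose t : ℝ) * (p ^ t * (1 - p) ^ (n - t))
        = ∑ t ∈ range (n + 1), (n.choose t : ℝ) * (p ^ t * (1 - p) ^ (n - t)) := by
      rw [Finset.range_eq_Ico, Finset.range_eq_Ico]
      exact Finset.sum_Ico_consecutive (fun t => (n.choose t : ℝ) * (p ^ t * (1 - p) ^ (n - t))) (by omega : 0 ≤ r + 1) (by omega : r + 1 ≤ n + 1)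
    have hIcc : Finset.Ico (r + 1) (n + 1) = Finset.Icc (r + 1) n := by
      ext t; simp
    rw [hone] at hsplit
    rw [hIcc] at hsplit
    have : ∑ t ∈ Finset.Icc (r + 1) n, (n.choose t : ℝ) * p ^ t * (1 - p) ^ (n - t)
        = ∑ t ∈ Finset.Icc (r + 1) n, (n.choose t : ℝ) * (p ^ t * (1 - p) ^ (n - t)) :=
      Finset.sum_congr rfl fun t _ => by ring
    rw [this, hT]
    linarith
  -- final
  have hM' : (0:ℝ) < (M : ℝ) := by exact_mod_cast hM
  rw [htail, one_div, inv_mul_eq_div, le_div_iff₀ hM']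
  have hE : ∑ i : Fin M, ∑ y ∈ (D i)ᶜ, f i y
      = (M : ℝ) - ∑ i : Fin M, ∑ y ∈ D i, f i y := by
    rw [Finset.sum_congr rfl fun i _ => herr i, Finset.sum_sub_distrib, Finset.sum_const]
    simp [Finset.card_univ, nsmul_eq_mul]
  calc (1 - T) * (M : ℝ) = (M : ℝ) - (M : ℝ) * T := by ring
    _ ≤ (M : ℝ) - ∑ i : Fin M, ∑ y ∈ D i, f i y := by linarith
    _ = ∑ i : Fin M, ∑ y ∈ (D i)ᶜ, f i y := hE.symm
end
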